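/- In the spinorial realization on V = MvPolynomial (Fin 4) ℂ ⊗_ℂ Cl, let J_{μν} = −i(L_{μν} + Σ_{μν}) with L_{μν} = a_μ†a_ν − a_μa_ν† and Σ_{μν} = (1/2)γ_μγ_ν, and for S ∈ {{1,2}, {3,4}, {1,2,3,4}} let 𝒜₋^S = Σ_{μ∈S} a_μγ_μ, 𝒜₊^S = Σ_{μ∈S} a_μ†γ_μ, 𝒜₀^S = (1/2)Σ_{μ∈S}{a_μ†,a_μ}. Then the Howe duality commutations hold: [J₁₂, 𝒜_•^{1,2}] = 0 and [J₃₄, 𝒜_•^{3,4}] = 0 for • ∈ {0,+,−}, and [J_{ij}, 𝒜_•^{1,2,3,4}] = 0 for all 1 ≤ i < j ≤ 4 and • ∈ {0,+,−}. -/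

import Mathlib

set_option linter.unusedSectionVars false
set_option maxHeartbeats 1000000





noncomputable section

open scoped TensorProduct

/-- The polynomial factor `ℂ[x₁,…,x₄]`. -/
abbrev Mpoly : Type := MvPolynomial (Fin 4) ℂ

/-- The standard quadratic form `Q(v) = Σ_μ v_μ²` on `ℂ⁴`. -/
def Qform : QuadraticForm ℂ (Fin 4 → ℂ) :=
  QuadraticMap.weightedSumSquares ℂ (fun _ : Fin 4 => (1 : ℂ))

/-- The Clifford algebra of `ℂ⁴`. -/
abbrev Cl : Type := CliffordAlgebra Qform

/-- The Clifford generators `γ_μ = ι(e_μ)`. -/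
def γc (μ : Fin 4) : Cl := CliffordAlgebra.ι Qform (Pi.single μ 1)

/-- The representation space `V = ℂ[x₁,…,x₄] ⊗ Cl`. -/
abbrev V : Type := Mpoly ⊗[ℂ] Cl

/-- `a_μ = ∂/∂x_μ` acting on the first factor of `V`. -/
def aop (μ : Fin 4) : Module.End ℂ V :=
  LinearMap.rTensor Cl (MvPolynomial.pderiv μ).toLinearMap

/-- `a_μ† = x_μ·` acting on the first factor of `V`. -/
def adop (μ : Fin 4) : Module.End ℂ V :=
  LinearMap.rTensor Cl (LinearMap.mulLeft ℂ (MvPolynomial.X μ : Mpoly))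

/-- `γ_μ` acting by left multiplication on the second factor of `V`. -/
def gop (μ : Fin 4) : Module.End ℂ V :=
  LinearMap.lTensor Mpoly (LinearMap.mulLeft ℂ (γc μ))

/-- `L_{μν} = a_μ†a_ν - a_μa_ν†`. -/
def Lop (μ ν : Fin 4) : Module.End ℂ V := adop μ * aop ν - aop μ * adop ν

/-- `Σ_{μν} = (1/2)γ_μγ_ν`. -/
def Sop (μ ν : Fin 4) : Module.End ℂ V := (2⁻¹ : ℂ) • (gop μ * gop ν)

/-- The total angular momentum `J_{μν} = -i(L_{μν} + Σ_{μν})` for `μ ≠ ν`, with the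
convention `J_{μμ} = 0`. -/
def Jop (μ ν : Fin 4) : Module.End ℂ V :=
  if μ = ν then 0 else -(Complex.I • (Lop μ ν + Sop μ ν))

/-- The Hamiltonian `H = (1/2)Σ_μ {a_μ†, a_μ}`. -/
def Hop : Module.End ℂ V :=
  (2⁻¹ : ℂ) • ∑ μ : Fin 4, (adop μ * aop μ + aop μ * adop μ)

/-- `𝒜₋^S = Σ_{μ∈S} a_μγ_μ`. -/
def AmS (S : Finset (Fin 4)) : Module.End ℂ V := ∑ μ ∈ S, aop μ * gop μ

/-- `𝒜₊^S = Σ_{μ∈S} a_μ†γ_μ`. -/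
def ApS (S : Finset (Fin 4)) : Module.End ℂ V := ∑ μ ∈ S, adop μ * gop μ

/-- `𝒜₀^S = (1/2)Σ_{μ∈S} {a_μ†, a_μ}`. -/
def A0S (S : Finset (Fin 4)) : Module.End ℂ V :=
  (2⁻¹ : ℂ) • ∑ μ ∈ S, (adop μ * aop μ + aop μ * adop μ)


namespace HoweAbs

variable {A : Type*} [Ring A] [Algebra ℂ A]

/-- Kronecker delta. -/
def dl (μ ν : Fin 4) : ℂ := if μ = ν then 1 else 0

/-- commutator -/
def cmA (x y : A) : A := x * y - y * x

lemma cmA_mul_left (x y z : A) : cmA (x * y) z = x * cmA y z + cmA x z * y := by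
  unfold cmA; noncomm_ring

lemma cmA_mul_right (x y z : A) : cmA x (y * z) = cmA x y * z + y * cmA x z := by
  unfold cmA; noncomm_ring

lemma cmA_add_left (x y z : A) : cmA (x + y) z = cmA x z + cmA y z := by
  unfold cmA; noncomm_ring

lemma cmA_sub_left (x y z : A) : cmA (x - y) z = cmA x z - cmA y z := by
  unfold cmA; noncomm_ring

lemma cmA_add_right (x y z : A) : cmA x (y + z) = cmA x y + cmA x z := by
  unfold cmA; noncomm_ring

lemma cmA_smul_left (c : ℂ) (x y : A) : cmA (c • x) y = c • cmA x y := by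
  unfold cmA; rw [smul_mul_assoc, mul_smul_comm, smul_sub]

lemma cmA_smul_right (c : ℂ) (x y : A) : cmA x (c • y) = c • cmA x y := by
  unfold cmA; rw [smul_mul_assoc, mul_smul_comm, smul_sub]

lemma cmA_neg_left (x y : A) : cmA (-x) y = -cmA x y := by
  unfold cmA; noncomm_ring

lemma cmA_sum_right (x : A) (S : Finset (Fin 4)) (f : Fin 4 → A) :
    cmA x (∑ ρ ∈ S, f ρ) = ∑ ρ ∈ S, cmA x (f ρ) := by
  unfold cmA
  rw [Finset.mul_sum, Finset.sum_mul, ← Finset.sum_sub_distrib]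

section Rel

variable {a ad g : Fin 4 → A}

/-- `L_{μν}` -/
def Lp (a ad : Fin 4 → A) (μ ν : Fin 4) : A := ad μ * a ν - a μ * ad ν
/-- `Σ_{μν}` -/
def Sp (g : Fin 4 → A) (μ ν : Fin 4) : A := (2⁻¹ : ℂ) • (g μ * g ν)

lemma cm_aa (r2 : ∀ μ ν, a μ * a ν = a ν * a μ) (μ ν : Fin 4) : cmA (a μ) (a ν) = 0 := by
  unfold cmA; rw [r2, sub_self]

lemma cm_aad (r1 : ∀ μ ν, a μ * ad ν = ad ν * a μ + dl μ ν • 1) (μ ν : Fin 4) : cmA (a μ) (ad ν) = dl μ ν • 1 := by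
  unfold cmA; rw [r1]; abel

lemma cm_ada (r1 : ∀ μ ν, a μ * ad ν = ad ν * a μ + dl μ ν • 1) (μ ν : Fin 4) : cmA (ad μ) (a ν) = -(dl ν μ • 1) := by
  unfold cmA; rw [r1]; abel

lemma cm_adad (r3 : ∀ μ ν, ad μ * ad ν = ad ν * ad μ) (μ ν : Fin 4) : cmA (ad μ) (ad ν) = 0 := by
  unfold cmA; rw [r3, sub_self]

lemma cm_ag (r5 : ∀ μ ν, a μ * g ν = g ν * a μ) (μ ν : Fin 4) : cmA (a μ) (g ν) = 0 := by
  unfold cmA; rw [r5, sub_self]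

lemma cm_ga (r5 : ∀ μ ν, a μ * g ν = g ν * a μ) (μ ν : Fin 4) : cmA (g μ) (a ν) = 0 := by
  unfold cmA; rw [← r5, sub_self]

lemma cm_adg (r6 : ∀ μ ν, ad μ * g ν = g ν * ad μ) (μ ν : Fin 4) : cmA (ad μ) (g ν) = 0 := by
  unfold cmA; rw [r6, sub_self]

lemma cm_gad (r6 : ∀ μ ν, ad μ * g ν = g ν * ad μ) (μ ν : Fin 4) : cmA (g μ) (ad ν) = 0 := by
  unfold cmA; rw [← r6, sub_self]

lemma cmL_a (r1 : ∀ μ ν, a μ * ad ν = ad ν * a μ + dl μ ν • 1) (r2 : ∀ μ ν, a μ * a ν = a ν * a μ) (μ ν ρ : Fin 4) :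
    cmA (Lp a ad μ ν) (a ρ) = dl ν ρ • a μ - dl μ ρ • a ν := by
  rw [Lp, cmA_sub_left, cmA_mul_left, cmA_mul_left, cm_aa r2, cm_ada r1,
    cm_ada r1, cm_aa r2]
  simp only [mul_zero, zero_add, add_zero, smul_mul_assoc, one_mul, neg_mul, mul_neg,
    mul_smul_comm, dl]
  by_cases hμρ : μ = ρ <;> by_cases hνρ : ν = ρ <;>
    simp_all [eq_comm] <;> abel

lemma cmL_ad (r1 : ∀ μ ν, a μ * ad ν = ad ν * a μ + dl μ ν • 1) (r3 : ∀ μ ν, ad μ * ad ν = ad ν * ad μ) (μ ν ρ : Fin 4) :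
    cmA (Lp a ad μ ν) (ad ρ) = dl ν ρ • ad μ - dl μ ρ • ad ν := by
  rw [Lp, cmA_sub_left, cmA_mul_left, cmA_mul_left, cm_adad r3, cm_aad r1,
    cm_aad r1, cm_adad r3]
  simp only [mul_zero, zero_add, add_zero, zero_mul, smul_mul_assoc, one_mul,
    mul_smul_comm, dl]
  by_cases hμρ : μ = ρ <;> by_cases hνρ : ν = ρ <;>
    simp_all [eq_comm] <;> abel

lemma cmL_g (r5 : ∀ μ ν, a μ * g ν = g ν * a μ) (r6 : ∀ μ ν, ad μ * g ν = g ν * ad μ) (μ ν ρ : Fin 4) : cmA (Lp a ad μ ν) (g ρ) = 0 := by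
  rw [Lp, cmA_sub_left, cmA_mul_left, cmA_mul_left, cm_ag r5, cm_adg r6,
    cm_ag r5, cm_adg r6]
  simp

lemma cmS_a (r5 : ∀ μ ν, a μ * g ν = g ν * a μ) (μ ν ρ : Fin 4) : cmA (Sp g μ ν) (a ρ) = 0 := by
  rw [Sp, cmA_smul_left, cmA_mul_left, cm_ga r5, cm_ga r5]
  simp

lemma cmS_ad (r6 : ∀ μ ν, ad μ * g ν = g ν * ad μ) (μ ν ρ : Fin 4) : cmA (Sp g μ ν) (ad ρ) = 0 := by
  rw [Sp, cmA_smul_left, cmA_mul_left, cm_gad r6, cm_gad r6]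
  simp

lemma cmS_g (r4 : ∀ μ ν, g μ * g ν = ((2:ℂ) * dl μ ν) • 1 - g ν * g μ) (μ ν ρ : Fin 4) : cmA (Sp g μ ν) (g ρ) = dl ν ρ • g μ - dl μ ρ • g ν := by
  rw [Sp, cmA_smul_left, cmA]
  have h1 : g ρ * (g μ * g ν) = ((2:ℂ) * dl ρ μ) • g ν - ((2:ℂ) * dl ρ ν) • g μ
      + g μ * g ν * g ρ := by
    rw [← mul_assoc, r4 ρ μ, sub_mul, smul_mul_assoc, one_mul, mul_assoc, r4 ρ ν, mul_sub,
      mul_smul_comm, mul_one, ← mul_assoc]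
    abel
  rw [h1]
  have h2 : ∀ x y : Fin 4, dl x y = dl y x := by intro x y; simp [dl, eq_comm]
  rw [h2 ρ μ, h2 ρ ν]
  match_scalars <;> ring

lemma sum_dl (S : Finset (Fin 4)) (ν : Fin 4) (hν : ν ∈ S) (F : Fin 4 → A) :
    ∑ ρ ∈ S, dl ν ρ • F ρ = F ν := by
  simp only [dl, ite_smul, one_smul, zero_smul]
  rw [Finset.sum_ite_eq S ν F, if_pos hν]

variable (r1 : ∀ μ ν, a μ * ad ν = ad ν * a μ + dl μ ν • 1)
variable (r2 : ∀ μ ν, a μ * a ν = a ν * a μ)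
variable (r3 : ∀ μ ν, ad μ * ad ν = ad ν * ad μ)
variable (r4 : ∀ μ ν, g μ * g ν = ((2:ℂ) * dl μ ν) • 1 - g ν * g μ)
variable (r5 : ∀ μ ν, a μ * g ν = g ν * a μ)
variable (r6 : ∀ μ ν, ad μ * g ν = g ν * ad μ)

include r1 r2 r4 r5 r6 in
lemma absm {S : Finset (Fin 4)} {μ ν : Fin 4} (hμ : μ ∈ S) (hν : ν ∈ S) :
    cmA (Lp a ad μ ν + Sp g μ ν) (∑ ρ ∈ S, a ρ * g ρ) = 0 := by
  rw [cmA_sum_right]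
  have step : ∀ ρ, cmA (Lp a ad μ ν + Sp g μ ν) (a ρ * g ρ)
      = (dl ν ρ • (a μ * g ρ) + dl ν ρ • (a ρ * g μ))
        - (dl μ ρ • (a ν * g ρ) + dl μ ρ • (a ρ * g ν)) := by
    intro ρ
    rw [cmA_add_left, cmA_mul_right, cmA_mul_right, cmL_a r1 r2, cmL_g r5 r6,
      cmS_a r5, cmS_g r4]
    simp only [mul_zero, zero_mul, add_zero, zero_add, sub_mul, smul_mul_assoc,
      mul_sub, mul_smul_comm]
    abel
  rw [Finset.sum_congr rfl (fun ρ _ => step ρ)]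
  rw [Finset.sum_sub_distrib, Finset.sum_add_distrib, Finset.sum_add_distrib,
    sum_dl S ν hν, sum_dl S ν hν, sum_dl S μ hμ, sum_dl S μ hμ]
  abel

include r1 r3 r4 r5 r6 in
lemma absp {S : Finset (Fin 4)} {μ ν : Fin 4} (hμ : μ ∈ S) (hν : ν ∈ S) :
    cmA (Lp a ad μ ν + Sp g μ ν) (∑ ρ ∈ S, ad ρ * g ρ) = 0 := by
  rw [cmA_sum_right]
  have step : ∀ ρ, cmA (Lp a ad μ ν + Sp g μ ν) (ad ρ * g ρ)
      = (dl ν ρ • (ad μ * g ρ) + dl ν ρ • (ad ρ * g μ))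
        - (dl μ ρ • (ad ν * g ρ) + dl μ ρ • (ad ρ * g ν)) := by
    intro ρ
    rw [cmA_add_left, cmA_mul_right, cmA_mul_right, cmL_ad r1 r3, cmL_g r5 r6,
      cmS_ad r6, cmS_g r4]
    simp only [mul_zero, zero_mul, add_zero, zero_add, sub_mul, smul_mul_assoc,
      mul_sub, mul_smul_comm]
    abel
  rw [Finset.sum_congr rfl (fun ρ _ => step ρ)]
  rw [Finset.sum_sub_distrib, Finset.sum_add_distrib, Finset.sum_add_distrib,
    sum_dl S ν hν, sum_dl S ν hν, sum_dl S μ hμ, sum_dl S μ hμ]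
  abel

include r1 r2 r3 r5 r6 in
lemma abs0 {S : Finset (Fin 4)} {μ ν : Fin 4} (hμ : μ ∈ S) (hν : ν ∈ S) :
    cmA (Lp a ad μ ν + Sp g μ ν)
      ((2⁻¹ : ℂ) • ∑ ρ ∈ S, (ad ρ * a ρ + a ρ * ad ρ)) = 0 := by
  rw [cmA_smul_right, cmA_sum_right]
  have step : ∀ ρ, cmA (Lp a ad μ ν + Sp g μ ν) (ad ρ * a ρ + a ρ * ad ρ)
      = ((dl ν ρ • (ad μ * a ρ) + dl ν ρ • (ad ρ * a μ))
          - (dl μ ρ • (ad ν * a ρ) + dl μ ρ • (ad ρ * a ν)))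
        + ((dl ν ρ • (a μ * ad ρ) + dl ν ρ • (a ρ * ad μ))
          - (dl μ ρ • (a ν * ad ρ) + dl μ ρ • (a ρ * ad ν))) := by
    intro ρ
    rw [cmA_add_right, cmA_add_left, cmA_add_left, cmA_mul_right, cmA_mul_right,
      cmA_mul_right, cmA_mul_right, cmL_a r1 r2, cmL_ad r1 r3, cmS_a r5, cmS_ad r6]
    simp only [mul_zero, zero_mul, add_zero, zero_add, sub_mul, smul_mul_assoc,
      mul_sub, mul_smul_comm]
    abel
  rw [Finset.sum_congr rfl (fun ρ _ => step ρ)]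
  rw [Finset.sum_add_distrib, Finset.sum_sub_distrib, Finset.sum_sub_distrib,
    Finset.sum_add_distrib, Finset.sum_add_distrib, Finset.sum_add_distrib,
    Finset.sum_add_distrib, sum_dl S ν hν, sum_dl S ν hν, sum_dl S μ hμ, sum_dl S μ hμ,
    sum_dl S ν hν, sum_dl S ν hν, sum_dl S μ hμ, sum_dl S μ hμ]
  abel_nf
  simp

/-- abstract J -/
def Jp (a ad g : Fin 4 → A) (μ ν : Fin 4) : A :=
  if μ = ν then 0 else -(Complex.I • (Lp a ad μ ν + Sp g μ ν))

lemma absJ {μ ν : Fin 4} (hμν : μ ≠ ν) (X : A)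
    (hX : cmA (Lp a ad μ ν + Sp g μ ν) X = 0) :
    Jp a ad g μ ν * X - X * Jp a ad g μ ν = 0 := by
  have h : Jp a ad g μ ν * X - X * Jp a ad g μ ν = cmA (Jp a ad g μ ν) X := rfl
  rw [h, Jp, if_neg hμν, cmA_neg_left, cmA_smul_left, hX, smul_zero, neg_zero]

end Rel

end HoweAbs



-- ## Auxiliary concrete commutation relations

open HoweAbs in
lemma pderiv_comm' (i j : Fin 4) (p : Mpoly) :
    MvPolynomial.pderiv i (MvPolynomial.pderiv j p)
      = MvPolynomial.pderiv j (MvPolynomial.pderiv i p) := by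
  induction p using MvPolynomial.induction_on with
  | C a => simp
  | add p q hp hq => simp [hp, hq]
  | mul_X p k hp =>
      simp only [MvPolynomial.pderiv_mul, map_add, hp, MvPolynomial.pderiv_X]
      by_cases hki : k = i <;> by_cases hkj : k = j <;>
        simp_all [Pi.single_apply] <;> ring_nf

open HoweAbs in
lemma gamma_rel (μ ν : Fin 4) :
    γc μ * γc ν + γc ν * γc μ = algebraMap ℂ Cl ((2:ℂ) * dl μ ν) := by
  rw [γc, γc, CliffordAlgebra.ι_mul_ι_add_swap]
  congr 1
  rw [QuadraticMap.polar]
  simp only [Qform, QuadraticMap.weightedSumSquares_apply, one_smul, smul_eq_mul, one_mul,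
    Pi.add_apply]
  rw [← Finset.sum_sub_distrib, ← Finset.sum_sub_distrib]
  rcases eq_or_ne μ ν with rfl | h
  · rw [Finset.sum_eq_single μ]
    · simp [Pi.single_apply, dl]; try ring_nf
    · intro i _ hi; simp [Pi.single_apply, hi.symm]
    · simp
  · rw [Finset.sum_eq_zero, dl, if_neg h, mul_zero]
    intro i _
    rcases eq_or_ne i μ with rfl | hiμ
    · simp [Pi.single_apply, h.symm]; try ring_nf
    · rcases eq_or_ne i ν with rfl | hiν
      · simp [Pi.single_apply, hiμ]; try ring_nf
      · simp [Pi.single_apply, hiμ, hiν]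

open HoweAbs in
lemma crel1 (μ ν : Fin 4) : aop μ * adop ν = adop ν * aop μ + dl μ ν • 1 := by
  refine TensorProduct.ext' fun p c => ?_
  simp only [Module.End.mul_apply, LinearMap.add_apply, LinearMap.smul_apply,
    Module.End.one_apply, aop, adop, LinearMap.rTensor_tmul, LinearMap.mulLeft_apply,
    Derivation.coeFn_coe, MvPolynomial.pderiv_mul]
  rw [TensorProduct.add_tmul]
  rcases eq_or_ne μ ν with rfl | h
  · simp [dl]; abel
  · simp [dl, h, MvPolynomial.pderiv_X_of_ne (Ne.symm h)]

open HoweAbs in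
lemma crel2 (μ ν : Fin 4) : aop μ * aop ν = aop ν * aop μ := by
  refine TensorProduct.ext' fun p c => ?_
  simp only [Module.End.mul_apply, aop, LinearMap.rTensor_tmul, Derivation.coeFn_coe]
  rw [pderiv_comm']

open HoweAbs in
lemma crel3 (μ ν : Fin 4) : adop μ * adop ν = adop ν * adop μ := by
  refine TensorProduct.ext' fun p c => ?_
  simp only [Module.End.mul_apply, adop, LinearMap.rTensor_tmul, LinearMap.mulLeft_apply]
  rw [mul_left_comm]

open HoweAbs in
lemma crel4 (μ ν : Fin 4) :
    gop μ * gop ν = ((2:ℂ) * dl μ ν) • 1 - gop ν * gop μ := by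
  refine TensorProduct.ext' fun p c => ?_
  simp only [Module.End.mul_apply, LinearMap.sub_apply, LinearMap.smul_apply,
    Module.End.one_apply, gop, LinearMap.lTensor_tmul, LinearMap.mulLeft_apply]
  have h : γc μ * (γc ν * c) = ((2:ℂ) * dl μ ν) • c - γc ν * (γc μ * c) := by
    rw [← mul_assoc, ← mul_assoc, eq_sub_iff_add_eq, ← add_mul, gamma_rel,
      Algebra.smul_def]
  rw [h, TensorProduct.tmul_sub]
  congr 1
  rw [TensorProduct.tmul_smul]

open HoweAbs in
lemma crel5 (μ ν : Fin 4) : aop μ * gop ν = gop ν * aop μ := by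
  refine TensorProduct.ext' fun p c => ?_
  simp only [Module.End.mul_apply, aop, gop, LinearMap.rTensor_tmul, LinearMap.lTensor_tmul]

open HoweAbs in
lemma crel6 (μ ν : Fin 4) : adop μ * gop ν = gop ν * adop μ := by
  refine TensorProduct.ext' fun p c => ?_
  simp only [Module.End.mul_apply, adop, gop, LinearMap.rTensor_tmul, LinearMap.lTensor_tmul]

/-- Howe duality commutations: `J₁₂` commutes with the `osp(1|2)` operators labelled by
`{1,2}`, `J₃₄` with those labelled by `{3,4}`, and every `J_{ij}` commutes with the
`osp(1|2)` operators labelled by `{1,2,3,4}`. -/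
theorem howe_duality_commutations :
    (Jop 0 1 * A0S {0, 1} - A0S {0, 1} * Jop 0 1 = 0) ∧
    (Jop 0 1 * ApS {0, 1} - ApS {0, 1} * Jop 0 1 = 0) ∧
    (Jop 0 1 * AmS {0, 1} - AmS {0, 1} * Jop 0 1 = 0) ∧
    (Jop 2 3 * A0S {2, 3} - A0S {2, 3} * Jop 2 3 = 0) ∧
    (Jop 2 3 * ApS {2, 3} - ApS {2, 3} * Jop 2 3 = 0) ∧
    (Jop 2 3 * AmS {2, 3} - AmS {2, 3} * Jop 2 3 = 0) ∧
    (∀ i j : Fin 4, i < j →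
      Jop i j * A0S {0, 1, 2, 3} - A0S {0, 1, 2, 3} * Jop i j = 0 ∧
      Jop i j * ApS {0, 1, 2, 3} - ApS {0, 1, 2, 3} * Jop i j = 0 ∧
      Jop i j * AmS {0, 1, 2, 3} - AmS {0, 1, 2, 3} * Jop i j = 0) := by
  have hmem4 : ∀ k : Fin 4, k ∈ ({0, 1, 2, 3} : Finset (Fin 4)) := by decide
  refine ⟨?_, ?_, ?_, ?_, ?_, ?_, ?_⟩
  · exact HoweAbs.absJ (a := aop) (ad := adop) (g := gop) (by decide) _
      (HoweAbs.abs0 crel1 crel2 crel3 crel5 crel6 (by decide) (by decide))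
  · exact HoweAbs.absJ (a := aop) (ad := adop) (g := gop) (by decide) _
      (HoweAbs.absp crel1 crel3 crel4 crel5 crel6 (by decide) (by decide))
  · exact HoweAbs.absJ (a := aop) (ad := adop) (g := gop) (by decide) _
      (HoweAbs.absm crel1 crel2 crel4 crel5 crel6 (by decide) (by decide))
  · exact HoweAbs.absJ (a := aop) (ad := adop) (g := gop) (by decide) _
      (HoweAbs.abs0 crel1 crel2 crel3 crel5 crel6 (by decide) (by decide))
  · exact HoweAbs.absJ (a := aop) (ad := adop) (g := gop) (by decide) _
      (HoweAbs.absp crel1 crel3 crel4 crel5 crel6 (by decide) (by decide))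
  · exact HoweAbs.absJ (a := aop) (ad := adop) (g := gop) (by decide) _
      (HoweAbs.absm crel1 crel2 crel4 crel5 crel6 (by decide) (by decide))
  · intro i j hij
    have hne : i ≠ j := Fin.ne_of_lt hij
    exact ⟨HoweAbs.absJ (a := aop) (ad := adop) (g := gop) hne _
        (HoweAbs.abs0 crel1 crel2 crel3 crel5 crel6 (hmem4 i) (hmem4 j)),
      HoweAbs.absJ (a := aop) (ad := adop) (g := gop) hne _
        (HoweAbs.absp crel1 crel3 crel4 crel5 crel6 (hmem4 i) (hmem4 j)),
      HoweAbs.absJ (a := aop) (ad := adop) (g := gop) hne _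
        (HoweAbs.absm crel1 crel2 crel4 crel5 crel6 (hmem4 i) (hmem4 j))⟩
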